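/- Define graphs G_k recursively by G_1 = K_1 and G_{k+1} = K_1 + (G_k ∪ G_k), where + denotes join and ∪ disjoint union. Then for every k ≥ 1, the 1-extendable chromatic number of G_k is at least k. -/

import Mathlib

open scoped Classical

variable {V : Type*}

/-- `S` is an independent set of the graph `G`. -/
def IndepF (G : SimpleGraph V) (S : Finset V) : Prop :=
  ∀ u ∈ S, ∀ v ∈ S, ¬ G.Adj u v

/-- The independence number of `G`. -/
noncomputable def alphaN [Fintype V] (G : SimpleGraph V) : ℕ :=
  Finset.univ.powerset.sup fun S => if IndepF G S then S.card else 0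

/-- `G` is 1-extendable: every vertex belongs to a maximum independent set. -/
def OneExt [Fintype V] (G : SimpleGraph V) : Prop :=
  ∀ v : V, ∃ S : Finset V, v ∈ S ∧ IndepF G S ∧ S.card = alphaN G

/-- The 1-extendable chromatic number of `G`. -/
noncomputable def chiOneExt [Fintype V] (G : SimpleGraph V) : ℕ :=
  sInf {k | ∃ c : V → Fin k, ∀ i : Fin k, OneExt (G.induce {v | c v = i})}

/-- The join (complete sum) of two graphs. -/
def gJoin {α β : Type*} (G : SimpleGraph α) (H : SimpleGraph β) : SimpleGraph (α ⊕ β) where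
  Adj u v := match u, v with
    | Sum.inl u, Sum.inl v => G.Adj u v
    | Sum.inr u, Sum.inr v => H.Adj u v
    | Sum.inl _, Sum.inr _ => True
    | Sum.inr _, Sum.inl _ => True
  symm := by constructor; rintro (u|u) (v|v) h <;> simp_all [SimpleGraph.adj_comm]
  loopless := by constructor; rintro (u|u) h <;> simp_all

/-- Vertex types of the recursively defined graphs: paper index k corresponds to here-index k - 1. -/
def Vt : ℕ → Type
  | 0 => Unit
  | k + 1 => Unit ⊕ (Vt k ⊕ Vt k)

noncomputable instance VtFintype : ∀ k, Fintype (Vt k)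
  | 0 => inferInstanceAs (Fintype Unit)
  | k + 1 =>
    letI := VtFintype k
    inferInstanceAs (Fintype (Unit ⊕ (Vt k ⊕ Vt k)))

/-- The recursively defined graphs: Gk 0 = K1 and Gk (k+1) = K1 + (Gk k ∪ Gk k). -/
def Gk : (k : ℕ) → SimpleGraph (Vt k)
  | 0 => ⊥
  | k + 1 => gJoin (⊥ : SimpleGraph Unit) (Gk k ⊕g Gk k)


lemma indepF_card_le_alphaN [Fintype V] {G : SimpleGraph V} {S : Finset V}
    (h : IndepF G S) : S.card ≤ alphaN G := by
  have := Finset.le_sup (f := fun S => if IndepF G S then S.card else 0)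
    (Finset.mem_powerset.2 (Finset.subset_univ S))
  simpa [h, alphaN] using this

lemma exists_indepF_card_eq_alphaN [Fintype V] (G : SimpleGraph V) :
    ∃ S : Finset V, IndepF G S ∧ S.card = alphaN G := by
  obtain ⟨S, -, hS⟩ := Finset.exists_mem_eq_sup Finset.univ.powerset ⟨∅, by simp⟩
    (fun S => if IndepF G S then S.card else 0)
  by_cases h : IndepF G S
  · exact ⟨S, h, by rw [alphaN, hS]; simp [h]⟩
  · refine ⟨∅, fun u hu => by simp at hu, ?_⟩
    rw [alphaN, hS]; simp [h]

lemma alphaN_le_card [Fintype V] (G : SimpleGraph V) : alphaN G ≤ Fintype.card V := by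
  refine Finset.sup_le fun S _ => ?_
  split
  · simpa using Finset.card_le_univ S
  · exact Nat.zero_le _

lemma indepF_image {W : Type*} {G : SimpleGraph V} {H : SimpleGraph W}
    (e : V ≃ W) (he : ∀ a b, G.Adj a b ↔ H.Adj (e a) (e b))
    {S : Finset V} (hS : IndepF G S) : IndepF H (S.image e) := by
  intro u hu v hv
  simp only [Finset.mem_image] at hu hv
  obtain ⟨a, ha, rfl⟩ := hu
  obtain ⟨b, hb, rfl⟩ := hv
  exact fun h => hS a ha b hb ((he a b).2 h)

lemma alphaN_eq_of_equiv {W : Type*} [Fintype V] [Fintype W] {G : SimpleGraph V}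
    {H : SimpleGraph W} (e : V ≃ W) (he : ∀ a b, G.Adj a b ↔ H.Adj (e a) (e b)) :
    alphaN G = alphaN H := by
  have he' : ∀ a b, H.Adj a b ↔ G.Adj (e.symm a) (e.symm b) := by
    intro a b
    rw [he (e.symm a) (e.symm b)]
    simp
  apply le_antisymm
  · obtain ⟨S, hS, hcard⟩ := exists_indepF_card_eq_alphaN G
    calc alphaN G = (S.image e).card := by
            rw [Finset.card_image_of_injective _ e.injective, hcard]
      _ ≤ alphaN H := indepF_card_le_alphaN (indepF_image e he hS)
  · obtain ⟨S, hS, hcard⟩ := exists_indepF_card_eq_alphaN H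
    calc alphaN H = (S.image e.symm).card := by
            rw [Finset.card_image_of_injective _ e.symm.injective, hcard]
      _ ≤ alphaN G := indepF_card_le_alphaN
            (indepF_image e.symm (fun a b => he' a b) hS)

lemma oneExt_of_equiv {W : Type*} [Fintype V] [Fintype W] {G : SimpleGraph V}
    {H : SimpleGraph W} (e : V ≃ W) (he : ∀ a b, G.Adj a b ↔ H.Adj (e a) (e b))
    (hG : OneExt G) : OneExt H := by
  intro w
  obtain ⟨S, hv, hind, hcard⟩ := hG (e.symm w)
  refine ⟨S.image e, ?_, indepF_image e he hind, ?_⟩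
  · exact Finset.mem_image.2 ⟨e.symm w, hv, by simp⟩
  · rw [Finset.card_image_of_injective _ e.injective, hcard,
      alphaN_eq_of_equiv e he]

lemma oneExt_induce_subset [Fintype V] {G : SimpleGraph V} {D A : Set V}
    (hA : A ⊆ D) (hsep : ∀ a ∈ A, ∀ b ∈ D, b ∉ A → ¬ G.Adj a b)
    (hD : OneExt (G.induce D)) : OneExt (G.induce A) := by
  intro v
  obtain ⟨S, hvS, hind, hcard⟩ := hD ⟨v.1, hA v.2⟩
  set SA : Finset ↥A := Finset.univ.filter (fun a : ↥A => (⟨a.1, hA a.2⟩ : ↥D) ∈ S)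
    with hSAdef
  set SB : Finset ↥D := S.filter (fun x : ↥D => x.1 ∉ A) with hSBdef
  have hSAmem : ∀ a : ↥A, a ∈ SA ↔ (⟨a.1, hA a.2⟩ : ↥D) ∈ S := by
    intro a; simp [hSAdef]
  -- card S = card SA + card SB
  have hsplit : S.card = SA.card + SB.card := by
    have h1 : SA.card = (S.filter (fun x : ↥D => x.1 ∈ A)).card := by
      apply Finset.card_bij (fun a _ => (⟨a.1, hA a.2⟩ : ↥D))
      · intro a ha
        exact Finset.mem_filter.2 ⟨(hSAmem a).1 ha, a.2⟩
      · intro a _ b _ h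
        injection h with h'
        exact Subtype.ext h'
      · intro x hx
        obtain ⟨hxS, hxA⟩ := Finset.mem_filter.1 hx
        exact ⟨⟨x.1, hxA⟩, (hSAmem _).2 hxS, rfl⟩
    rw [h1, hSBdef]
    rw [Finset.card_filter_add_card_filter_not]
  -- independence of SA in induce A
  have hindSA : IndepF (G.induce A) SA := by
    intro a ha b hb hab
    exact hind _ ((hSAmem a).1 ha) _ ((hSAmem b).1 hb) hab
  have hvSA : v ∈ SA := (hSAmem v).2 hvS
  refine ⟨SA, hvSA, hindSA, ?_⟩
  refine le_antisymm (indepF_card_le_alphaN hindSA) ?_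
  by_contra hlt
  push_neg at hlt
  obtain ⟨T, hTind, hTcard⟩ := exists_indepF_card_eq_alphaN (G.induce A)
  set U : Finset ↥D := (T.image fun a : ↥A => (⟨a.1, hA a.2⟩ : ↥D)) ∪ SB with hUdef
  have hUind : IndepF (G.induce D) U := by
    intro x hx y hy hxy
    have hmem : ∀ z : ↥D, z ∈ U → (∃ a ∈ T, (a : V) = z.1) ∨ (z ∈ S ∧ z.1 ∉ A) := by
      intro z hz
      rcases Finset.mem_union.1 hz with hz | hz
      · obtain ⟨a, ha, rfl⟩ := Finset.mem_image.1 hz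
        exact Or.inl ⟨a, ha, rfl⟩
      · exact Or.inr (Finset.mem_filter.1 hz)
    have hadj : G.Adj x.1 y.1 := hxy
    rcases hmem x hx with ⟨a, ha, hax⟩ | ⟨hxS, hxA⟩ <;>
      rcases hmem y hy with ⟨b, hb, hby⟩ | ⟨hyS, hyA⟩
    · refine hTind a ha b hb ?_
      show G.Adj a.1 b.1
      rw [hax, hby]; exact hadj
    · exact hsep a.1 (hax ▸ a.2) y.1 y.2 hyA (hax ▸ hadj)
    · exact hsep b.1 (hby ▸ b.2) x.1 x.2 hxA (hby ▸ hadj.symm)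
    · exact hind x hxS y hyS hxy
  have hUcard : U.card = T.card + SB.card := by
    rw [hUdef, Finset.card_union_of_disjoint, Finset.card_image_of_injective]
    · exact fun a b h => by injection h with h'; exact Subtype.ext h'
    · rw [Finset.disjoint_left]
      rintro x hx hx'
      obtain ⟨a, _, rfl⟩ := Finset.mem_image.1 hx
      exact (Finset.mem_filter.1 hx').2 a.2
  have := indepF_card_le_alphaN hUind
  rw [hUcard, hTcard, ← hcard, hsplit] at this
  omega

lemma oneExt_irrel {V : Type*} {G : SimpleGraph V} (i1 i2 : Fintype V)
    (h : @OneExt V i1 G) : @OneExt V i2 G := by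
  cases Subsingleton.elim i1 i2
  exact h

-- Gk adjacency facts
lemma gk_adj_u {m : ℕ} (w : Vt (m+1)) (hw : w ≠ Sum.inl ()) :
    (Gk (m+1)).Adj (Sum.inl ()) w := by
  show (gJoin ⊥ (Gk m ⊕g Gk m)).Adj _ _
  rcases w with w | w
  · exact absurd rfl hw
  · simp [gJoin]

lemma gk_adj_copy1 {m : ℕ} (a b : Vt m) :
    (Gk (m+1)).Adj (Sum.inr (Sum.inl a)) (Sum.inr (Sum.inl b)) ↔ (Gk m).Adj a b := by
  show (gJoin ⊥ (Gk m ⊕g Gk m)).Adj _ _ ↔ _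
  simp [gJoin]

lemma gk_adj_copy2 {m : ℕ} (a b : Vt m) :
    (Gk (m+1)).Adj (Sum.inr (Sum.inr a)) (Sum.inr (Sum.inr b)) ↔ (Gk m).Adj a b := by
  show (gJoin ⊥ (Gk m ⊕g Gk m)).Adj _ _ ↔ _
  simp [gJoin]

lemma gk_not_adj_cross {m : ℕ} (a b : Vt m) :
    ¬ (Gk (m+1)).Adj (Sum.inr (Sum.inl a)) (Sum.inr (Sum.inr b)) := by
  show ¬ (gJoin ⊥ (Gk m ⊕g Gk m)).Adj _ _
  simp [gJoin]

set_option maxHeartbeats 1000000 in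
/-- restriction of a 1-extendable coloring to a copy avoided by the universal vertex's class -/
lemma step_copy {m N : ℕ} (c : Vt (m+1) → Fin N)
    (hc : ∀ i, OneExt ((Gk (m+1)).induce {v | c v = i}))
    (ι : Vt m → Vt (m+1)) (hinj : Function.Injective ι)
    (hadj : ∀ a b, (Gk (m+1)).Adj (ι a) (ι b) ↔ (Gk m).Adj a b)
    (hcross : ∀ (a : Vt m) (w : Vt (m+1)), w ∉ Set.range ι → w ≠ Sum.inl () →
      ¬ (Gk (m+1)).Adj (ι a) w)
    (hmiss : ∀ v, c (ι v) ≠ c (Sum.inl ()))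
    (i : Fin N) : OneExt ((Gk m).induce {v | c (ι v) = i}) := by
  set D : Set (Vt (m+1)) := {w | c w = i} with hD
  set A : Set (Vt (m+1)) := D ∩ Set.range ι with hAdef
  have hsep : ∀ a ∈ A, ∀ b ∈ D, b ∉ A → ¬ (Gk (m+1)).Adj a b := by
    rintro a ⟨haD, x, rfl⟩ b hbD hbA
    have hbr : b ∉ Set.range ι := fun hr => hbA ⟨hbD, hr⟩
    have hbu : b ≠ Sum.inl () := by
      rintro rfl
      exact hmiss x (haD.trans hbD.symm)
    exact hcross x b hbr hbu
  have hOE : OneExt ((Gk (m+1)).induce A) :=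
    oneExt_irrel _ _
      (oneExt_induce_subset Set.inter_subset_left hsep (oneExt_irrel _ _ (hc i)))
  set f : ↥{v | c (ι v) = i} → ↥A := fun v => ⟨ι v.1, v.2, v.1, rfl⟩ with hf
  have hbij : Function.Bijective f := by
    constructor
    · intro a b h
      injection h with h'
      exact Subtype.ext (hinj h')
    · rintro ⟨w, hwD, x, rfl⟩
      exact ⟨⟨x, hwD⟩, rfl⟩
  refine oneExt_of_equiv (Equiv.ofBijective f hbij).symm ?_ hOE
  intro a b
  obtain ⟨a', rfl⟩ := hbij.2 a
  obtain ⟨b', rfl⟩ := hbij.2 b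
  rw [show (Equiv.ofBijective f hbij).symm (f a') = a' from
      (Equiv.ofBijective f hbij).symm_apply_apply a',
    show (Equiv.ofBijective f hbij).symm (f b') = b' from
      (Equiv.ofBijective f hbij).symm_apply_apply b']
  show (Gk (m+1)).Adj (ι a'.1) (ι b'.1) ↔ (Gk m).Adj a'.1 b'.1
  exact hadj _ _

lemma gk_clique {m N : ℕ} (c : Vt (m+1) → Fin N)
    (hc : ∀ i, OneExt ((Gk (m+1)).induce {v | c v = i})) :
    (∀ a, c (Sum.inr (Sum.inl a)) ≠ c (Sum.inl ())) ∨
    (∀ b, c (Sum.inr (Sum.inr b)) ≠ c (Sum.inl ())) := by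
  by_contra h
  push_neg at h
  obtain ⟨⟨a, ha⟩, b, hb⟩ := h
  set j := c (Sum.inl ()) with hj
  set C : Set (Vt (m+1)) := {w | c w = j} with hC
  have hu : (Sum.inl () : Vt (m+1)) ∈ C := rfl
  set u' : ↥C := ⟨Sum.inl (), hu⟩ with hu'
  obtain ⟨S, huS, hSind, hScard⟩ := hc j u'
  -- S = {u'}
  have hS1 : S = {u'} := by
    apply Finset.eq_singleton_iff_unique_mem.2
    refine ⟨huS, fun z hz => ?_⟩
    by_contra hne
    have hzv : z.1 ≠ Sum.inl () := fun hh => hne (Subtype.ext hh)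
    exact hSind u' huS z hz (gk_adj_u z.1 hzv)
  have halpha : alphaN ((Gk (m+1)).induce C) = 1 := by
    rw [← hScard, hS1, Finset.card_singleton]
  set x : ↥C := ⟨Sum.inr (Sum.inl a), ha⟩ with hx
  set y : ↥C := ⟨Sum.inr (Sum.inr b), hb⟩ with hy
  have hxy : x ≠ y := by
    intro h
    have h' := congrArg Subtype.val h
    exact absurd (Sum.inr_injective h') (by simp)
  have hpair : IndepF ((Gk (m+1)).induce C) {x, y} := by
    intro p hp q hq
    simp only [Finset.mem_insert, Finset.mem_singleton] at hp hq
    have hxyadj : ¬ ((Gk (m+1)).induce C).Adj x y := gk_not_adj_cross a b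
    rcases hp with rfl | rfl <;> rcases hq with rfl | rfl
    · exact ((Gk (m+1)).induce C).irrefl
    · exact hxyadj
    · exact fun h => hxyadj h.symm
    · exact ((Gk (m+1)).induce C).irrefl
  have h2 : ({x, y} : Finset ↥C).card = 2 := Finset.card_pair hxy
  have := indepF_card_le_alphaN hpair
  rw [h2, halpha] at this
  omega

lemma gk_colors : ∀ (m N : ℕ) (c : Vt m → Fin N),
    (∀ i, OneExt ((Gk m).induce {v | c v = i})) →
    m + 1 ≤ (Finset.univ.image c).card := by
  intro m
  induction m with
  | zero =>
    intro N c _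
    have : c (show Vt 0 from ()) ∈ Finset.univ.image c :=
      Finset.mem_image_of_mem c (Finset.mem_univ _)
    simpa using Finset.card_pos.2 ⟨_, this⟩
  | succ m ih =>
    intro N c hc
    have key : ∃ ι : Vt m → Vt (m+1),
        (Finset.univ.image fun v => c (ι v)) ⊆ Finset.univ.image c ∧
        c (Sum.inl ()) ∉ (Finset.univ.image fun v => c (ι v)) ∧
        m + 1 ≤ (Finset.univ.image fun v => c (ι v)).card := by
      rcases gk_clique c hc with h | h
      · refine ⟨fun v => Sum.inr (Sum.inl v), ?_, ?_, ?_⟩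
        · intro z hz
          obtain ⟨v, _, rfl⟩ := Finset.mem_image.1 hz
          exact Finset.mem_image_of_mem c (Finset.mem_univ _)
        · intro hz
          obtain ⟨v, _, hv⟩ := Finset.mem_image.1 hz
          exact h v hv
        · refine ih N _ (fun i => oneExt_irrel _ _ (step_copy c hc _ ?_ ?_ ?_ h i))
          · intro a b hab
            exact Sum.inl_injective (Sum.inr_injective hab)
          · exact fun a b => gk_adj_copy1 a b
          · rintro a (⟨⟩ | w | w) hr hne
            · exact absurd rfl hne
            · exact absurd ⟨w, rfl⟩ hr
            · exact gk_not_adj_cross a w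
      · refine ⟨fun v => Sum.inr (Sum.inr v), ?_, ?_, ?_⟩
        · intro z hz
          obtain ⟨v, _, rfl⟩ := Finset.mem_image.1 hz
          exact Finset.mem_image_of_mem c (Finset.mem_univ _)
        · intro hz
          obtain ⟨v, _, hv⟩ := Finset.mem_image.1 hz
          exact h v hv
        · refine ih N _ (fun i => oneExt_irrel _ _ (step_copy c hc _ ?_ ?_ ?_ h i))
          · intro a b hab
            exact Sum.inr_injective (Sum.inr_injective hab)
          · exact fun a b => gk_adj_copy2 a b
          · rintro a (⟨⟩ | w | w) hr hne
            · exact absurd rfl hne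
            · exact fun hadj => gk_not_adj_cross w a hadj.symm
            · exact absurd ⟨w, rfl⟩ hr
    obtain ⟨ι, hsub, hnotmem, hcard⟩ := key
    have h1 : insert (c (Sum.inl ())) (Finset.univ.image fun v => c (ι v)) ⊆
        Finset.univ.image c := by
      refine Finset.insert_subset ?_ hsub
      exact Finset.mem_image_of_mem c (Finset.mem_univ _)
    have h2 := Finset.card_le_card h1
    rw [Finset.card_insert_of_notMem hnotmem] at h2
    omega

lemma exists_coloring {V : Type*} [Fintype V] (G : SimpleGraph V) :
    ∃ n, ∃ c : V → Fin n, ∀ i, OneExt (G.induce {v | c v = i}) := by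
  refine ⟨Fintype.card V, Fintype.equivFin V, fun i => ?_⟩
  intro x
  have hsub : Subsingleton ↥{v | Fintype.equivFin V v = i} := by
    constructor
    rintro ⟨a, ha⟩ ⟨b, hb⟩
    have : a = b := (Fintype.equivFin V).injective (ha.trans hb.symm)
    exact Subtype.ext this
  have hind : IndepF (G.induce {v | Fintype.equivFin V v = i}) {x} := by
    intro u hu v hv
    simp only [Finset.mem_singleton] at hu hv
    subst hu; subst hv
    exact (G.induce _).irrefl
  refine ⟨{x}, Finset.mem_singleton_self x, hind, ?_⟩
  rw [Finset.card_singleton]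
  refine le_antisymm ?_ ?_
  · simpa using indepF_card_le_alphaN hind
  · calc alphaN _ ≤ Fintype.card ↥{v | Fintype.equivFin V v = i} := alphaN_le_card _
      _ ≤ 1 := Fintype.card_le_one_iff_subsingleton.2 hsub

/-- For every k ≥ 1, the 1-extendable chromatic number of the paper graph G_k
(here Gk (k - 1)) is at least k. -/
theorem chiOneExt_Gk_ge (k : ℕ) (hk : 1 ≤ k) : k ≤ chiOneExt (Gk (k - 1)) := by
  rw [chiOneExt]
  obtain ⟨n, c, hcol⟩ := exists_coloring (Gk (k - 1))
  refine le_csInf ⟨n, c, hcol⟩ ?_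
  rintro b ⟨c', hc'⟩
  have h1 := gk_colors (k - 1) b c' hc'
  have h2 : (Finset.univ.image c').card ≤ b := by
    calc (Finset.univ.image c').card ≤ Finset.univ.card :=
          Finset.card_le_univ _
      _ = b := by simp
  omega
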